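/- Let (K,|·|) be a normed field, n ≥ 2, u, v ∈ Kⁿ, and 1 ≤ p ≤ ∞ with conjugate exponent q. If v has pairwise distinct components and ‖(u − v)/d(v)‖_p < 1/2^{1/q}, then u also has pairwise distinct components. -/

import Mathlib

open Finset Filter Topology
open scoped ENNReal

noncomputable def pnorm {n : ℕ} (p : ℝ≥0∞) (v : Fin n → ℝ) : ℝ :=
  if p = ⊤ then ⨆ i, |v i| else (∑ i, |v i| ^ p.toReal) ^ (1 / p.toReal)

noncomputable def epow (a : ℝ) (p : ℝ≥0∞) : ℝ :=
  if p = ⊤ then 1 else a ^ (1 / p.toReal)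

noncomputable def dsep {K : Type*} [NormedField K] {n : ℕ} (x : Fin n → K) (i : Fin n) : ℝ :=
  sInf {r : ℝ | ∃ j, j ≠ i ∧ r = ‖x i - x j‖}

noncomputable def Wcorr {K : Type*} [NormedField K] {n : ℕ} (f : Polynomial K)
    (x : Fin n → K) (i : Fin n) : K :=
  Polynomial.eval (x i) f / (f.leadingCoeff * ∏ j ∈ Finset.univ.erase i, (x i - x j))

def IsRootVector {K : Type*} [NormedField K] {n : ℕ} (f : Polynomial K) (ξ : Fin n → K) : Prop :=
  ∀ z : K, Polynomial.eval z f = f.leadingCoeff * ∏ i, (z - ξ i)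

lemma dsep_set_finite {K : Type*} [NormedField K] {n : ℕ} (v : Fin n → K) (i : Fin n) :
    {r : ℝ | ∃ j, j ≠ i ∧ r = ‖v i - v j‖}.Finite :=
  Set.Finite.subset (Set.finite_range (fun j => ‖v i - v j‖))
    (by rintro r ⟨j, _, rfl⟩; exact ⟨j, rfl⟩)

lemma dsep_exists {K : Type*} [NormedField K] {n : ℕ} (hn : 2 ≤ n) (v : Fin n → K) (i : Fin n) :
    ∃ j, j ≠ i ∧ dsep v i = ‖v i - v j‖ := by
  haveI : Nontrivial (Fin n) := Fin.nontrivial_iff_two_le.mpr hn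
  obtain ⟨j, hj⟩ := exists_ne i
  have hne : {r : ℝ | ∃ j, j ≠ i ∧ r = ‖v i - v j‖}.Nonempty := ⟨‖v i - v j‖, j, hj, rfl⟩
  exact hne.csInf_mem (dsep_set_finite v i)

lemma dsep_le {K : Type*} [NormedField K] {n : ℕ} (v : Fin n → K) (i j : Fin n) (hj : j ≠ i) :
    dsep v i ≤ ‖v i - v j‖ :=
  csInf_le (dsep_set_finite v i).bddBelow ⟨j, hj, rfl⟩

lemma dsep_pos {K : Type*} [NormedField K] {n : ℕ} (hn : 2 ≤ n) {v : Fin n → K}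
    (hv : Function.Injective v) (i : Fin n) : 0 < dsep v i := by
  obtain ⟨j, hj, he⟩ := dsep_exists hn v i
  rw [he]
  exact norm_pos_iff.mpr (sub_ne_zero.mpr (hv.ne hj.symm))

lemma two_holder {a b : ℝ} (ha : 0 ≤ a) (hb : 0 ≤ b) {pr : ℝ} (hpr : 1 ≤ pr) :
    a + b ≤ (a ^ pr + b ^ pr) ^ (1 / pr) * 2 ^ (1 - 1 / pr) := by
  have hpr0 : 0 < pr := lt_of_lt_of_le one_pos hpr
  have key : (a + b) ^ pr ≤ 2 ^ (pr - 1) * (a ^ pr + b ^ pr) := by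
    have h := NNReal.rpow_add_le_mul_rpow_add_rpow ⟨a, ha⟩ ⟨b, hb⟩ hpr
    have h' := NNReal.coe_le_coe.2 h
    push_cast [NNReal.coe_rpow] at h'
    convert h' using 2 <;> rfl
  have e1 : (pr - 1) * (1 / pr) = 1 - 1 / pr := by field_simp
  calc a + b = ((a + b) ^ pr) ^ (1 / pr) := by
        rw [← Real.rpow_mul (add_nonneg ha hb), mul_one_div, div_self hpr0.ne', Real.rpow_one]
    _ ≤ (2 ^ (pr - 1) * (a ^ pr + b ^ pr)) ^ (1 / pr) :=
        Real.rpow_le_rpow (by positivity) key (by positivity)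
    _ = 2 ^ ((pr - 1) * (1 / pr)) * (a ^ pr + b ^ pr) ^ (1 / pr) := by
        rw [Real.mul_rpow (by positivity) (by positivity), ← Real.rpow_mul (by norm_num)]
    _ = (a ^ pr + b ^ pr) ^ (1 / pr) * 2 ^ (1 - 1 / pr) := by rw [e1, mul_comm]

/-- If `v ∈ Kⁿ` has pairwise distinct components and
`‖(u−v)/d(v)‖_p < 1/2^{1/q}`, then `u` also has pairwise distinct components. -/
theorem distinct_components_of_close {K : Type*} [NormedField K] {n : ℕ} (hn : 2 ≤ n)
    (u v : Fin n → K) (hv : Function.Injective v)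
    (p q : ℝ≥0∞) (hp : 1 ≤ p) (hpq : 1 / p + 1 / q = 1)
    (h : pnorm p (fun j => ‖u j - v j‖ / dsep v j) < 1 / epow 2 q) :
    Function.Injective u := by
  set a : Fin n → ℝ := fun k => ‖u k - v k‖ / dsep v k with ha
  have hdpos : ∀ k, 0 < dsep v k := dsep_pos hn hv
  have hann : ∀ k, 0 ≤ a k := fun k => div_nonneg (norm_nonneg _) (hdpos k).le
  intro i j hij
  by_contra hne
  -- key inequality : a i + a j < 1
  have key : a i + a j < 1 := by
    by_cases hP : p = ⊤
    · -- q = 1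
      subst hP
      rw [one_div, ENNReal.inv_top, zero_add, one_div, ENNReal.inv_eq_one] at hpq
      subst hpq
      have he : epow 2 1 = 2 := by simp [epow]
      rw [he] at h
      have hpn : pnorm ⊤ a = ⨆ k, |a k| := by simp [pnorm]
      rw [hpn] at h
      have hbdd : BddAbove (Set.range fun k => |a k|) := Set.Finite.bddAbove (Set.finite_range _)
      have h1 : a i < 1 / 2 := lt_of_le_of_lt ((le_abs_self _).trans (le_ciSup hbdd i)) h
      have h2 : a j < 1 / 2 := lt_of_le_of_lt ((le_abs_self _).trans (le_ciSup hbdd j)) h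
      linarith
    · have hpr1 : 1 ≤ p.toReal := by
        rw [show (1 : ℝ) = (1 : ℝ≥0∞).toReal by simp]
        exact (ENNReal.toReal_le_toReal (by simp) hP).2 hp
      have hpr0 : 0 < p.toReal := lt_of_lt_of_le one_pos hpr1
      have hpn : pnorm p a = (∑ k, a k ^ p.toReal) ^ (1 / p.toReal) := by
        simp only [pnorm, if_neg hP]
        congr 1
        exact Finset.sum_congr rfl fun k _ => by rw [abs_of_nonneg (hann k)]
      rw [hpn] at h
      have hsum : a i ^ p.toReal + a j ^ p.toReal ≤ ∑ k, a k ^ p.toReal := by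
        rw [← Finset.sum_pair (f := fun k => a k ^ p.toReal) hne]
        exact Finset.sum_le_sum_of_subset_of_nonneg (Finset.subset_univ _)
          (fun k _ _ => Real.rpow_nonneg (hann k) _)
      have hmono : (a i ^ p.toReal + a j ^ p.toReal) ^ (1 / p.toReal)
          ≤ (∑ k, a k ^ p.toReal) ^ (1 / p.toReal) :=
        Real.rpow_le_rpow (add_nonneg (Real.rpow_nonneg (hann i) _) (Real.rpow_nonneg (hann j) _)) hsum (by positivity)
      by_cases hQ : q = ⊤
      · -- p = 1
        subst hQ
        rw [one_div (⊤ : ℝ≥0∞), ENNReal.inv_top, add_zero, one_div,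
          ENNReal.inv_eq_one] at hpq
        have he : epow 2 ⊤ = 1 := by simp [epow]
        rw [he, div_one] at h
        have hp1 : p.toReal = 1 := by rw [hpq]; simp
        rw [hp1] at hmono h
        simp only [Real.rpow_one, one_div_one] at hmono h
        calc a i + a j ≤ ∑ k, a k ^ (1 : ℝ) := by simpa using hmono
          _ < 1 := by simpa using h
      · -- 1 < p, both finite
        have hq0 : q ≠ 0 := by
          rintro rfl
          simp [one_div] at hpq
        have hreal : 1 / p.toReal + 1 / q.toReal = 1 := by
          have hfp : 1 / p ≠ ⊤ := by
            rw [one_div]; exact ENNReal.inv_ne_top.mpr (lt_of_lt_of_le zero_lt_one hp).ne'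
          have hfq : 1 / q ≠ ⊤ := by
            rw [one_div]; exact ENNReal.inv_ne_top.mpr hq0
          have := congrArg ENNReal.toReal hpq
          rw [ENNReal.toReal_add hfp hfq] at this
          simpa [ENNReal.toReal_div] using this
        have he : epow 2 q = 2 ^ (1 / q.toReal) := by simp [epow, hQ]
        rw [he] at h
        have h2pos : (0 : ℝ) < 2 ^ (1 / q.toReal) := Real.rpow_pos_of_pos two_pos _
        have hqr : 1 - 1 / p.toReal = 1 / q.toReal := by linarith
        calc a i + a j
            ≤ (a i ^ p.toReal + a j ^ p.toReal) ^ (1 / p.toReal) * 2 ^ (1 - 1 / p.toReal) :=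
              two_holder (hann i) (hann j) hpr1
          _ = (a i ^ p.toReal + a j ^ p.toReal) ^ (1 / p.toReal) * 2 ^ (1 / q.toReal) := by
              rw [hqr]
          _ ≤ (∑ k, a k ^ p.toReal) ^ (1 / p.toReal) * 2 ^ (1 / q.toReal) :=
              mul_le_mul_of_nonneg_right hmono h2pos.le
          _ < (1 / 2 ^ (1 / q.toReal)) * 2 ^ (1 / q.toReal) :=
              mul_lt_mul_of_pos_right h h2pos
          _ = 1 := by rw [one_div, inv_mul_cancel₀ h2pos.ne']
  -- derive contradiction
  have hvij : 0 < ‖v i - v j‖ := norm_pos_iff.mpr (sub_ne_zero.mpr (hv.ne hne))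
  have h1 : ‖u i - v i‖ ≤ a i * ‖v i - v j‖ := by
    have hle := dsep_le v i j (Ne.symm hne)
    have : a i * dsep v i = ‖u i - v i‖ := div_mul_cancel₀ _ (hdpos i).ne'
    calc ‖u i - v i‖ = a i * dsep v i := this.symm
      _ ≤ a i * ‖v i - v j‖ := mul_le_mul_of_nonneg_left hle (hann i)
  have h2 : ‖u j - v j‖ ≤ a j * ‖v i - v j‖ := by
    have hle := dsep_le v j i hne
    have heq : a j * dsep v j = ‖u j - v j‖ := div_mul_cancel₀ _ (hdpos j).ne'
    calc ‖u j - v j‖ = a j * dsep v j := heq.symm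
      _ ≤ a j * ‖v j - v i‖ := mul_le_mul_of_nonneg_left hle (hann j)
      _ = a j * ‖v i - v j‖ := by rw [norm_sub_rev]
  have htri : ‖v i - v j‖ ≤ ‖u i - v i‖ + ‖u j - v j‖ := by
    have hrw : v i - v j = (v i - u i) + (u j - v j) := by rw [hij]; ring
    calc ‖v i - v j‖ = ‖(v i - u i) + (u j - v j)‖ := by rw [hrw]
      _ ≤ ‖v i - u i‖ + ‖u j - v j‖ := norm_add_le _ _
      _ = ‖u i - v i‖ + ‖u j - v j‖ := by rw [norm_sub_rev]
  nlinarith [mul_lt_mul_of_pos_right key hvij]
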